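/- Let A(x) and B(x) be polynomials with nonnegative integer coefficients, n = A(1)·B(1), and p a prime not dividing A(1). If A(x)·B(x) ≡ 1 + x + ⋯ + x^{n−1} (mod x^n − 1), then A(x^p)·B(x) ≡ 1 + x + ⋯ + x^{n−1} (mod x^n − 1). -/

import Mathlib

open Polynomial Finset

noncomputable def red (n : ℕ) (f : Polynomial ℤ) : Polynomial ℤ :=
  ⟨AddMonoidAlgebra.ofCoeff (Finsupp.mapDomain (· % n) f.toFinsupp.coeff)⟩

lemma red_coeff (n : ℕ) (f : Polynomial ℤ) (i : ℕ) :
    (red n f).coeff i = Finsupp.mapDomain (· % n) f.toFinsupp.coeff i := rfl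

lemma red_add (n : ℕ) (f g : Polynomial ℤ) : red n (f + g) = red n f + red n g := by
  ext i
  rw [coeff_add, red_coeff, red_coeff, red_coeff, ← Finsupp.add_apply, ← Finsupp.mapDomain_add]
  rfl

lemma red_monomial (n : ℕ) (j : ℕ) (a : ℤ) : red n (monomial j a) = monomial (j % n) a := by
  ext i
  rw [red_coeff, toFinsupp_monomial]
  show Finsupp.mapDomain _ (Finsupp.single j a) i = _
  rw [Finsupp.mapDomain_single, coeff_monomial, Finsupp.single_apply]

lemma dvd_sub_red (n : ℕ) (f : Polynomial ℤ) :
    (X ^ n - 1 : Polynomial ℤ) ∣ f - red n f := by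
  induction f using Polynomial.induction_on' with
  | add f g hf hg =>
    rw [red_add]
    have h1 : f + g - (red n f + red n g) = (f - red n f) + (g - red n g) := by ring
    rw [h1]; exact dvd_add hf hg
  | monomial j a =>
    rw [red_monomial, ← C_mul_X_pow_eq_monomial, ← C_mul_X_pow_eq_monomial, ← mul_sub]
    apply Dvd.dvd.mul_left
    have hj : (X : Polynomial ℤ) ^ j = (X ^ n) ^ (j / n) * X ^ (j % n) := by
      rw [← pow_mul, ← pow_add, Nat.div_add_mod]
    rw [hj]
    have h2 : ((X : Polynomial ℤ)^n)^(j/n) * X^(j%n) - X^(j%n)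
        = ((X^n)^(j/n) - 1^(j/n)) * X^(j%n) := by ring
    rw [h2]
    exact Dvd.dvd.mul_right (sub_dvd_pow_sub_pow _ _ _) _

lemma dvd_mul_geom {R : Type*} [CommRing R] (n : ℕ) (g : Polynomial R) :
    (X ^ n - 1 : Polynomial R) ∣
      g * (∑ i ∈ range n, X ^ i) - C (g.eval 1) * (∑ i ∈ range n, X ^ i) := by
  induction g using Polynomial.induction_on' with
  | add f g hf hg =>
    rw [eval_add, map_add]
    have h1 : (f + g) * (∑ i ∈ range n, (X:Polynomial R) ^ i)
        - (C (f.eval 1) + C (g.eval 1)) * (∑ i ∈ range n, X ^ i)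
        = (f * (∑ i ∈ range n, X ^ i) - C (f.eval 1) * (∑ i ∈ range n, X ^ i))
        + (g * (∑ i ∈ range n, X ^ i) - C (g.eval 1) * (∑ i ∈ range n, X ^ i)) := by ring
    rw [h1]; exact dvd_add hf hg
  | monomial j a =>
    rw [← C_mul_X_pow_eq_monomial, eval_mul, eval_C, eval_pow, eval_X, one_pow, mul_one]
    have e1 : ((X:Polynomial R)^j - 1) = (∑ i ∈ range j, X^i) * (X - 1) :=
      (geom_sum_mul (X:Polynomial R) j).symm
    have e2 : ((X:Polynomial R)^n - 1) = (∑ i ∈ range n, X^i) * (X - 1) :=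
      (geom_sum_mul (X:Polynomial R) n).symm
    have key : (X : Polynomial R)^j * (∑ i ∈ range n, X ^ i) - (∑ i ∈ range n, X ^ i)
        = (∑ i ∈ range j, X^i) * (X^n - 1) := by
      rw [e2, show (X:Polynomial R)^j * (∑ i ∈ range n, X ^ i) - (∑ i ∈ range n, X ^ i)
        = ((X:Polynomial R)^j - 1) * (∑ i ∈ range n, X ^ i) from by ring, e1]
      ring
    have h3 : C a * X^j * (∑ i ∈ range n, (X:Polynomial R) ^ i)
        - C a * (∑ i ∈ range n, X ^ i)
        = C a * ((X:Polynomial R)^j * (∑ i ∈ range n, X ^ i) - (∑ i ∈ range n, X ^ i)) := by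
      ring
    rw [h3, key]
    exact Dvd.dvd.mul_left (Dvd.intro_left _ rfl) _

lemma red_coeff_nonneg (n : ℕ) (f : Polynomial ℤ) (hf : ∀ i, 0 ≤ f.coeff i) (i : ℕ) :
    0 ≤ (red n f).coeff i := by
  rw [red_coeff, Finsupp.mapDomain, Finsupp.sum_apply]
  apply Finset.sum_nonneg
  intro j _
  dsimp only
  rw [Finsupp.single_apply]
  split
  · exact hf j
  · exact le_refl 0

lemma red_coeff_zero (n : ℕ) (hn : 0 < n) (f : Polynomial ℤ) (i : ℕ) (hi : n ≤ i) :
    (red n f).coeff i = 0 := by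
  rw [red_coeff]
  apply Finsupp.notMem_support_iff.mp
  intro hmem
  have h1 := Finsupp.mapDomain_support hmem
  simp only [Finset.mem_image] at h1
  obtain ⟨j, _, hj⟩ := h1
  have := Nat.mod_lt j hn
  omega

lemma geom_coeff {R : Type*} [CommRing R] (n i : ℕ) :
    (∑ k ∈ range n, (X : Polynomial R) ^ k).coeff i = if i < n then 1 else 0 := by
  rw [Polynomial.finset_sum_coeff]
  simp only [coeff_X_pow]
  rw [Finset.sum_ite_eq (range n) i (fun _ => (1:R))]
  simp [Finset.mem_range]

lemma geom_degree_lt {R : Type*} [CommRing R] (n : ℕ) :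
    (∑ k ∈ range n, (X : Polynomial R) ^ k).degree < n := by
  rw [Polynomial.degree_lt_iff_coeff_zero]
  intro m hm
  rw [geom_coeff, if_neg (by omega)]

theorem tijdeman_poly (A B : Polynomial ℤ)
    (hA : ∀ i : ℕ, 0 ≤ A.coeff i) (hB : ∀ i : ℕ, 0 ≤ B.coeff i)
    (n : ℕ) (hn : (n : ℤ) = A.eval 1 * B.eval 1)
    (p : ℕ) (hp : p.Prime) (hpA : ¬ (p : ℤ) ∣ A.eval 1)
    (h : (X ^ n - 1 : Polynomial ℤ) ∣ (A * B - ∑ i ∈ Finset.range n, X ^ i)) :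
    (X ^ n - 1 : Polynomial ℤ) ∣ (A.comp (X ^ p) * B - ∑ i ∈ Finset.range n, X ^ i) := by
  rcases Nat.eq_zero_or_pos n with h0 | hn0
  · subst h0
    simp only [pow_zero, sub_self, zero_dvd_iff, range_zero, Finset.sum_empty, sub_zero] at h ⊢
    rcases mul_eq_zero.mp h with hA0 | hB0
    · rw [hA0, zero_comp, zero_mul]
    · rw [hB0, mul_zero]
  haveI : Fact p.Prime := ⟨hp⟩
  obtain ⟨k, hk⟩ : ∃ k, p = k + 1 := ⟨p - 1, (Nat.succ_pred_eq_of_pos hp.pos).symm⟩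
  set φ : ℤ →+* ZMod p := Int.castRingHom (ZMod p) with hφ
  set N : Polynomial ℤ := ∑ i ∈ range n, X ^ i with hNdef
  set f : Polynomial ℤ := A.comp (X ^ p) * B with hfdef
  set Cp : Polynomial ℤ := red n f with hCpdef
  have hred : (X ^ n - 1 : Polynomial ℤ) ∣ f - Cp := dvd_sub_red n f
  set A' : Polynomial (ZMod p) := A.map φ with hA'
  set B' : Polynomial (ZMod p) := B.map φ with hB'
  set N' : Polynomial (ZMod p) := ∑ i ∈ range n, X ^ i with hN'
  have hmapN : N.map φ = N' := by
    rw [hNdef, hN', Polynomial.map_sum]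
    simp [Polynomial.map_pow]
  have h' : (X ^ n - 1 : Polynomial (ZMod p)) ∣ A' * B' - N' := by
    obtain ⟨q, hq⟩ := h
    refine ⟨q.map φ, ?_⟩
    have h2 := congrArg (Polynomial.map φ) hq
    simp only [Polynomial.map_sub, Polynomial.map_mul, Polynomial.map_pow, Polynomial.map_one,
      Polynomial.map_X] at h2
    rw [hA', hB', ← hmapN]
    exact h2
  have hAe : A'.eval 1 ≠ 0 := by
    show (A.map φ).eval 1 ≠ 0
    rw [eval_one_map]
    simpa [hφ, ZMod.intCast_zmod_eq_zero_iff_dvd] using hpA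
  have hpow : A'.eval 1 ^ k = 1 := by
    have hpk : p - 1 = k := by omega
    have := ZMod.pow_card_sub_one_eq_one hAe
    rwa [hpk] at this
  have hC1 : C ((A' ^ k).eval 1) = (1 : Polynomial (ZMod p)) := by
    rw [eval_pow, hpow, map_one]
  have hcomp : (A.comp (X ^ p)).map φ = A' ^ p := by
    rw [Polynomial.map_comp, Polynomial.map_pow, Polynomial.map_X, ← hA',
      ← Polynomial.expand_eq_comp_X_pow]
    have h3 := Polynomial.map_frobenius_expand (p := p) (f := A')
    rwa [ZMod.frobenius_zmod, Polynomial.map_id] at h3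
  have hdvd1 : (X ^ n - 1 : Polynomial (ZMod p)) ∣ A' ^ p * B' - N' := by
    have hpow2 : A' ^ p = A' ^ k * A' := by
      rw [← pow_succ]; exact congrArg (fun m => A' ^ m) hk
    have e : A' ^ p * B' - N' = A' ^ k * (A' * B' - N')
        + (A' ^ k * N' - C ((A' ^ k).eval 1) * N') := by
      rw [hpow2, hC1]; ring
    rw [e]
    exact dvd_add (h'.mul_left _) (dvd_mul_geom n (A' ^ k))
  have hmapf : f.map φ = A' ^ p * B' := by
    rw [hfdef, Polynomial.map_mul, hcomp, hB']
  have hdvd2 : (X ^ n - 1 : Polynomial (ZMod p)) ∣ Cp.map φ - N' := by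
    have hm : (X ^ n - 1 : Polynomial (ZMod p)) ∣ f.map φ - Cp.map φ := by
      obtain ⟨q, hq⟩ := hred
      refine ⟨q.map φ, ?_⟩
      have h2 := congrArg (Polynomial.map φ) hq
      simpa only [Polynomial.map_sub, Polynomial.map_mul, Polynomial.map_pow, Polynomial.map_one,
        Polynomial.map_X] using h2
    have h4 := dvd_sub hdvd1 hm
    have e : A' ^ p * B' - N' - (f.map φ - Cp.map φ) = Cp.map φ - N' := by
      rw [hmapf]; ring
    rwa [e] at h4
  have hdegC : (Cp.map φ).degree < (n : ℕ) := by
    rw [Polynomial.degree_lt_iff_coeff_zero]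
    intro m hm
    rw [coeff_map, hCpdef, red_coeff_zero n hn0 f m hm, map_zero]
  have hdegN : N'.degree < (n : ℕ) := geom_degree_lt n
  have hdegX : ((X : Polynomial (ZMod p)) ^ n - 1).degree = (n : ℕ) := by
    rw [show (1 : Polynomial (ZMod p)) = C 1 from C_1.symm]
    exact degree_X_pow_sub_C hn0 1
  have hzero : Cp.map φ - N' = 0 := by
    apply Polynomial.eq_zero_of_dvd_of_degree_lt hdvd2
    rw [hdegX]
    exact lt_of_le_of_lt (degree_sub_le _ _) (max_lt hdegC hdegN)
  have hCeq : Cp.map φ = N' := sub_eq_zero.mp hzero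
  have hcoef : ∀ i, i < n → ((Cp.coeff i : ZMod p)) = 1 := by
    intro i hi
    have h5 := congrArg (fun q => Polynomial.coeff q i) hCeq
    simp only [coeff_map, hN', geom_coeff, hi, if_true] at h5
    simpa [hφ] using h5
  have hAc : ∀ i, 0 ≤ (A.comp (X ^ p)).coeff i := by
    intro i
    rw [← Polynomial.expand_eq_comp_X_pow, Polynomial.coeff_expand hp.pos]
    split
    · exact hA _
    · exact le_refl 0
  have hfc : ∀ i, 0 ≤ f.coeff i := by
    intro i
    rw [hfdef, Polynomial.coeff_mul]
    exact Finset.sum_nonneg fun x _ => mul_nonneg (hAc _) (hB _)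
  have hc_nonneg : ∀ i, 0 ≤ Cp.coeff i := red_coeff_nonneg n f hfc
  have hone : ∀ i ∈ range n, 1 ≤ Cp.coeff i := by
    intro i hi
    rw [Finset.mem_range] at hi
    have h1 := hcoef i hi
    by_contra hlt
    push_neg at hlt
    have hz : Cp.coeff i = 0 := le_antisymm (by omega) (hc_nonneg i)
    rw [hz] at h1
    simp at h1
  have hdegCZ : Cp.degree < (n : ℕ) := by
    rw [Polynomial.degree_lt_iff_coeff_zero]
    intro m hm
    exact red_coeff_zero n hn0 f m hm
  have hnd : Cp.natDegree < n := by
    rcases eq_or_ne Cp 0 with hc | hc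
    · simpa [hc] using hn0
    · exact (Polynomial.natDegree_lt_iff_degree_lt hc).mpr hdegCZ
  have hf1 : f.eval 1 = (n : ℤ) := by
    rw [hfdef, eval_mul, eval_comp, eval_pow, eval_X, one_pow, ← hn]
  have hev : Cp.eval 1 = (n : ℤ) := by
    obtain ⟨q, hq⟩ := hred
    have h2 := congrArg (Polynomial.eval 1) hq
    simp only [eval_mul, eval_sub, eval_pow, eval_X, eval_one, one_pow, sub_self,
      zero_mul] at h2
    have : f.eval 1 = Cp.eval 1 := by linarith
    rw [← this, hf1]
  have hsum : ∑ i ∈ range n, Cp.coeff i = (n : ℤ) := by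
    have h6 := Polynomial.eval_eq_sum_range' hnd (1 : ℤ)
    simp only [one_pow, mul_one] at h6
    rw [← h6, hev]
  have hall : ∀ i ∈ range n, Cp.coeff i = 1 := by
    have h7 : ∑ i ∈ range n, (1 : ℤ) = ∑ i ∈ range n, Cp.coeff i := by
      rw [hsum]; simp
    intro i hi
    exact ((Finset.sum_eq_sum_iff_of_le hone).mp h7 i hi).symm
  have hCN : Cp = N := by
    ext i
    rw [hNdef, geom_coeff]
    by_cases hi : i < n
    · rw [hall i (Finset.mem_range.mpr hi), if_pos hi]
    · rw [hCpdef, red_coeff_zero n hn0 f i (le_of_not_gt hi), if_neg hi]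
  rw [← hCN]
  exact hred
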